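/- arXiv:2012.10818 — 3 statements merged into one kernel-verified Lean document; each statement's English description precedes it below -/
import Mathlib

section
/- For every z ∈ ℂ \ {0, -1/λ} (with λ = e^{2πiθ}), the second iterate f_α∘f_α(z) converges to g_∞(z) := λ(z+z²)/(1+λz) as α → ∞, and for every z ∈ ℂ \ {0, -1} it converges to g₀(z) := (z+z²)/(1+λz) as α → 0; moreover the convergence as α → ∞ is locally uniform on compact subsets of ℂ \ {-1/λ} (away from the poles). -/
open Complex Filter Topology

noncomputable def Complex.abs : AbsoluteValue ℂ ℝ := IsAbsoluteValue.toAbsoluteValue (norm : ℂ → ℝ)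

@[simp] lemma Complex.abs_apply (z : ℂ) : Complex.abs z = ‖z‖ := rfl

lemma Complex.norm_eq_abs (z : ℂ) : ‖z‖ = Complex.abs z := rfl

lemma Complex.continuous_abs : Continuous Complex.abs := continuous_norm

private lemma key0 (lam α z : ℂ) (hA : 1 + lam * z ≠ 0) (hB : z + z ^ 2 ≠ 0)
    (hα : α ≠ 0) (hBA : z + z ^ 2 + α * (1 + lam * z) ≠ 0) :
    α * (1 + lam * (α * (1 + lam * z) / (z + z ^ 2))) /
      (α * (1 + lam * z) / (z + z ^ 2) + (α * (1 + lam * z) / (z + z ^ 2)) ^ 2)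
    = (z + z ^ 2) * ((z + z ^ 2) + lam * α * (1 + lam * z)) /
      ((1 + lam * z) * ((z + z ^ 2) + α * (1 + lam * z))) := by
  have hw : α * (1 + lam * z) / (z + z ^ 2) + (α * (1 + lam * z) / (z + z ^ 2)) ^ 2
      = α * (1 + lam * z) * ((z + z ^ 2) + α * (1 + lam * z)) / (z + z ^ 2) ^ 2 := by
    field_simp
  rw [hw, div_eq_div_iff]
  · rw [mul_div_assoc', add_div' _ _ _ hB, mul_div_assoc', div_mul_eq_mul_div, mul_div_assoc', div_eq_div_iff hB (pow_ne_zero _ hB)]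
    ring
  · exact div_ne_zero (mul_ne_zero (mul_ne_zero hα hA) hBA) (pow_ne_zero _ hB)
  · exact mul_ne_zero hA hBA

private lemma key_eq (lam α z : ℂ) (hA : 1 + lam * z ≠ 0)
    (hgt : Complex.abs (z + z ^ 2) < Complex.abs α * Complex.abs (1 + lam * z)) :
    α * (1 + lam * (α * (1 + lam * z) / (z + z ^ 2))) /
      (α * (1 + lam * z) / (z + z ^ 2) + (α * (1 + lam * z) / (z + z ^ 2)) ^ 2)
    = lam * (z + z ^ 2) / (1 + lam * z)
      + (z + z ^ 2) ^ 2 * (1 - lam) / ((1 + lam * z) * ((z + z ^ 2) + α * (1 + lam * z))) := by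
  by_cases hB : z + z ^ 2 = 0
  · simp [hB]
  · have hα : α ≠ 0 := by
      intro h
      rw [h] at hgt
      simp at hgt
      exact absurd hgt (not_lt.mpr (by positivity))
    have hBA : z + z ^ 2 + α * (1 + lam * z) ≠ 0 := by
      intro h
      have h2 : z + z ^ 2 = -(α * (1 + lam * z)) := by linear_combination h
      rw [h2] at hgt
      simp [map_mul] at hgt
    rw [key0 lam α z hA hB hα hBA]
    rw [div_add_div _ _ hA (mul_ne_zero hA hBA), div_eq_div_iff (mul_ne_zero hA hBA) (mul_ne_zero hA (mul_ne_zero hA hBA))]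
    ring

set_option maxHeartbeats 1000000 in
theorem stmt4 (θ : ℝ) (hθ : Irrational θ) (lam : ℂ)
    (hlam : lam = Complex.exp (2 * Real.pi * Complex.I * θ))
    (f : ℂ → ℂ → ℂ) (hf : ∀ α z, f α z = α * (1 + lam * z) / (z + z ^ 2))
    (ginf g0 : ℂ → ℂ)
    (hginf : ∀ z, ginf z = lam * (z + z ^ 2) / (1 + lam * z))
    (hg0 : ∀ z, g0 z = (z + z ^ 2) / (1 + lam * z)) :
    (∀ z : ℂ, z ≠ 0 → z ≠ -lam⁻¹ →
      Tendsto (fun α => f α (f α z)) (Bornology.cobounded ℂ) (𝓝 (ginf z))) ∧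
    (∀ z : ℂ, z ≠ 0 → z ≠ -1 →
      Tendsto (fun α => f α (f α z)) (𝓝[≠] (0 : ℂ)) (𝓝 (g0 z))) ∧
    TendstoLocallyUniformlyOn (fun α z => f α (f α z)) ginf
      (Bornology.cobounded ℂ) {z : ℂ | z ≠ -lam⁻¹} := by
  have hlam0 : lam ≠ 0 := by rw [hlam]; exact Complex.exp_ne_zero _
  have hAiff : ∀ z : ℂ, z ≠ -lam⁻¹ → 1 + lam * z ≠ 0 := by
    intro z hz h
    apply hz
    field_simp
    linear_combination h
  -- Part 3 : locally uniform convergence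
  have h3 : TendstoLocallyUniformlyOn (fun α z => f α (f α z)) ginf
      (Bornology.cobounded ℂ) {z : ℂ | z ≠ -lam⁻¹} := by
    rw [tendstoLocallyUniformlyOn_iff_forall_isCompact isOpen_ne]
    intro K hKS hK
    rcases K.eq_empty_or_nonempty with rfl | hne
    · intro u hu
      simp
    obtain ⟨z0, hz0K, hz0⟩ := hK.exists_isMinOn hne
      ((Complex.continuous_abs.comp (by continuity : Continuous fun z : ℂ => 1 + lam * z)).continuousOn)
    obtain ⟨z1, hz1K, hz1⟩ := hK.exists_isMaxOn hne
      ((Complex.continuous_abs.comp (by continuity : Continuous fun z : ℂ => z + z ^ 2)).continuousOn)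
    set ε := Complex.abs (1 + lam * z0) with hεdef
    set M := Complex.abs (z1 + z1 ^ 2) with hMdef
    have hεpos : 0 < ε := by
      have := hAiff z0 (hKS hz0K)
      simpa [hεdef] using this
    have hM0 : 0 ≤ M := hMdef ▸ Complex.abs.nonneg _
    clear_value ε M
    rw [Metric.tendstoUniformlyOn_iff]
    intro ε' hε'
    set C := M ^ 2 * Complex.abs (1 - lam) with hCdef
    have hC0 : 0 ≤ C := by positivity
    set R := (M + C / (ε' * ε)) / ε + 1 with hRdef
    clear_value C R
    have hev : ∀ᶠ α : ℂ in Bornology.cobounded ℂ, R ≤ ‖α‖ :=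
      tendsto_norm_cobounded_atTop.eventually (eventually_ge_atTop R)
    filter_upwards [hev] with α hαR z hzK
    have hA : 1 + lam * z ≠ 0 := hAiff z (hKS hzK)
    have hεA : ε ≤ Complex.abs (1 + lam * z) := by rw [hεdef]; exact hz0 hzK
    have hBM : Complex.abs (z + z ^ 2) ≤ M := by rw [hMdef]; exact hz1 hzK
    have hαabs : R ≤ Complex.abs α := by rwa [Complex.norm_eq_abs] at hαR
    have hDcancel : C / (ε' * ε) * (ε' * ε) = C := div_mul_cancel₀ _ (by positivity)
    have h1 : M + C / (ε' * ε) + ε ≤ Complex.abs α * ε := by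
      have hRε : R * ε = M + C / (ε' * ε) + ε := by
        rw [hRdef]
        field_simp
      have hint : R * ε ≤ Complex.abs α * ε :=
        mul_le_mul_of_nonneg_right hαabs (le_of_lt hεpos)
      linarith [hRε, hint]
    have hMlt : M < Complex.abs α * ε := by
      have hCd : 0 ≤ C / (ε' * ε) := by positivity
      linarith
    have hgt : Complex.abs (z + z ^ 2) < Complex.abs α * Complex.abs (1 + lam * z) := by
      calc Complex.abs (z + z ^ 2) ≤ M := hBM
        _ < Complex.abs α * ε := hMlt
        _ ≤ Complex.abs α * Complex.abs (1 + lam * z) :=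
            mul_le_mul_of_nonneg_left hεA (Complex.abs.nonneg _)
    simp only [hf, hginf]
    rw [key_eq lam α z hA hgt, Complex.dist_eq, sub_add_cancel_left, Complex.norm_eq_abs, map_neg_eq_map,
      map_div₀, map_mul, map_mul, map_pow]
    -- lower bound for the denominator piece
    have t1 : Complex.abs (α * (1 + lam * z)) ≤
        Complex.abs (z + z ^ 2 + α * (1 + lam * z)) + Complex.abs (z + z ^ 2) := by
      have := Complex.abs.add_le (z + z ^ 2 + α * (1 + lam * z)) (-(z + z ^ 2))
      have e : z + z ^ 2 + α * (1 + lam * z) + -(z + z ^ 2) = α * (1 + lam * z) := by ring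
      rw [e, map_neg_eq_map] at this
      exact this
    have hBA_lb : Complex.abs α * ε - M ≤ Complex.abs (z + z ^ 2 + α * (1 + lam * z)) := by
      have hmm : Complex.abs (α * (1 + lam * z)) = Complex.abs α * Complex.abs (1 + lam * z) :=
        map_mul _ _ _
      nlinarith [Complex.abs.nonneg α, mul_le_mul_of_nonneg_left hεA (Complex.abs.nonneg α)]
    have hdpos : 0 < ε * (Complex.abs α * ε - M) := by
      apply mul_pos hεpos
      linarith
    calc Complex.abs (z + z ^ 2) ^ 2 * Complex.abs (1 - lam) /
          (Complex.abs (1 + lam * z) * Complex.abs (z + z ^ 2 + α * (1 + lam * z)))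
        ≤ C / (ε * (Complex.abs α * ε - M)) := by
          apply div_le_div₀ hC0
          · rw [hCdef]
            have hp : Complex.abs (z + z ^ 2) ^ 2 ≤ M ^ 2 :=
              pow_le_pow_left₀ (Complex.abs.nonneg _) hBM 2
            exact mul_le_mul_of_nonneg_right hp (Complex.abs.nonneg _)
          · exact hdpos
          · exact mul_le_mul hεA hBA_lb (by linarith) (Complex.abs.nonneg _)
      _ < ε' := by
          rw [div_lt_iff₀ hdpos]
          have h2 : (C / (ε' * ε) + ε) * (ε' * ε) ≤ (Complex.abs α * ε - M) * (ε' * ε) :=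
            mul_le_mul_of_nonneg_right (by linarith) (by positivity)
          nlinarith [h2, hDcancel, mul_pos (mul_pos hε' hεpos) hεpos]
  refine ⟨?_, ?_, h3⟩
  · intro z hz0 hz
    have := h3.tendsto_at (show z ∈ {z : ℂ | z ≠ -lam⁻¹} from hz)
    rw [hginf] at this ⊢
    exact this
  · intro z hz0 hz1
    have hB : z + z ^ 2 ≠ 0 := by
      have e : z + z ^ 2 = z * (1 + z) := by ring
      rw [e]
      exact mul_ne_zero hz0 (fun h => hz1 (by linear_combination h))
    by_cases hA : 1 + lam * z = 0
    · have hzero : ∀ α : ℂ, f α (f α z) = 0 := by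
        intro α
        simp only [hf, hA]
        simp
      have hg : g0 z = 0 := by rw [hg0, hA, div_zero]
      rw [hg]
      simp only [hzero]
      exact tendsto_const_nhds
    · have hBpos : 0 < Complex.abs (z + z ^ 2) := by simpa using hB
      have h1 : ∀ᶠ α in 𝓝[≠] (0 : ℂ), α ≠ 0 := eventually_mem_nhdsWithin
      have h2 : ∀ᶠ α in 𝓝[≠] (0 : ℂ),
          Complex.abs (α * (1 + lam * z)) < Complex.abs (z + z ^ 2) := by
        have hc : Tendsto (fun α : ℂ => Complex.abs (α * (1 + lam * z))) (𝓝 0) (𝓝 0) := by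
          have hcont : Continuous fun α : ℂ => Complex.abs (α * (1 + lam * z)) := by continuity
          simpa using hcont.tendsto 0
        exact Tendsto.eventually_lt_const hBpos (hc.mono_left nhdsWithin_le_nhds)
      have hev : ∀ᶠ α in 𝓝[≠] (0 : ℂ), f α (f α z)
          = (z + z ^ 2) * ((z + z ^ 2) + lam * α * (1 + lam * z)) /
            ((1 + lam * z) * ((z + z ^ 2) + α * (1 + lam * z))) := by
        filter_upwards [h1, h2] with α hα hαB
        have hBA : z + z ^ 2 + α * (1 + lam * z) ≠ 0 := by
          intro h
          rw [show z + z ^ 2 = -(α * (1 + lam * z)) by linear_combination h] at hαB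
          simp at hαB
        simp only [hf]
        exact key0 lam α z hA hB hα hBA
      have hlim : Tendsto (fun α : ℂ => (z + z ^ 2) * ((z + z ^ 2) + lam * α * (1 + lam * z)) /
          ((1 + lam * z) * ((z + z ^ 2) + α * (1 + lam * z)))) (𝓝[≠] (0 : ℂ)) (𝓝 (g0 z)) := by
        have hc : ContinuousAt (fun α : ℂ => (z + z ^ 2) * ((z + z ^ 2) + lam * α * (1 + lam * z)) /
            ((1 + lam * z) * ((z + z ^ 2) + α * (1 + lam * z)))) 0 := by
          apply ContinuousAt.div
          · fun_prop
          · fun_prop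
          · simp only [zero_mul, add_zero]
            exact mul_ne_zero hA hB
        have hT := hc.tendsto.mono_left (nhdsWithin_le_nhds : 𝓝[≠] (0 : ℂ) ≤ 𝓝 0)
        have hval : (z + z ^ 2) * ((z + z ^ 2) + lam * 0 * (1 + lam * z)) /
            ((1 + lam * z) * ((z + z ^ 2) + 0 * (1 + lam * z))) = g0 z := by
          rw [hg0]
          rw [div_eq_div_iff (mul_ne_zero hA (by simpa using hB)) hA]
          ring
        rw [← hval]
        exact hT
      exact Tendsto.congr' (hev.mono fun α h => h.symm) hlim
end

section
/- Let λ ∈ ℂ with |λ| = 1 and 1 < |λ-1| ≤ 2. Define g̃(ζ) = ζ + 1 - 1/(1+(λ-1)ζ). If Re ζ > 2, then Re g̃(ζ) > Re ζ. In particular the right half-plane {Re ζ > 2} is forward invariant under g̃ and Re g̃ⁿ(ζ) → ∞ for every ζ with Re ζ > 2. -/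
open Complex Filter Topology

lemma stmt10_key (lam : ℂ) (h1 : 1 < ‖lam - 1‖) (ζ : ℂ) (hζ : 2 < ζ.re) :
    ζ.re + (1 - 1 / (ζ.re - 1)) ≤ (ζ + 1 - 1 / (1 + (lam - 1) * ζ)).re := by
  set w : ℂ := 1 + (lam - 1) * ζ with hw
  have habsζ : ζ.re ≤ ‖ζ‖ := Complex.re_le_norm ζ
  have habsmul : ‖ζ‖ ≤ ‖(lam - 1) * ζ‖ := by
    rw [norm_mul]
    nlinarith [norm_nonneg ζ]
  have htri : ‖(lam - 1) * ζ‖ ≤ ‖w‖ + 1 := by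
    have : (lam - 1) * ζ = w + (-1) := by ring
    rw [this]
    simpa using norm_add_le w (-1)
  have habsw : ζ.re - 1 ≤ ‖w‖ := by linarith
  have hw1 : 1 < ‖w‖ := by linarith
  have hwne : w ≠ 0 := by
    intro h
    rw [h, norm_zero] at hw1
    linarith
  have hre : (1 / w).re ≤ 1 / (ζ.re - 1) := by
    calc (1 / w).re ≤ ‖1 / w‖ := Complex.re_le_norm _
      _ = 1 / ‖w‖ := by rw [norm_div, norm_one]
      _ ≤ 1 / (ζ.re - 1) := by
          apply one_div_le_one_div_of_le <;> linarith
  have : (ζ + 1 - 1 / w).re = ζ.re + 1 - (1 / w).re := by simp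
  rw [this]
  linarith

theorem stmt10 (lam : ℂ) (habs : ‖lam‖ = 1)
    (h1 : 1 < ‖lam - 1‖) (h2 : ‖lam - 1‖ ≤ 2)
    (g : ℂ → ℂ) (hg : ∀ ζ, g ζ = ζ + 1 - 1 / (1 + (lam - 1) * ζ)) :
    (∀ ζ : ℂ, 2 < ζ.re → ζ.re < (g ζ).re) ∧
    (∀ ζ : ℂ, 2 < ζ.re → ∀ n : ℕ, 2 < (g^[n] ζ).re) ∧
    (∀ ζ : ℂ, 2 < ζ.re → Tendsto (fun n : ℕ => (g^[n] ζ).re) atTop atTop) := by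
  have key : ∀ ζ : ℂ, 2 < ζ.re → ζ.re + (1 - 1 / (ζ.re - 1)) ≤ (g ζ).re := by
    intro ζ hζ
    rw [hg]
    exact stmt10_key lam h1 ζ hζ
  have part1 : ∀ ζ : ℂ, 2 < ζ.re → ζ.re < (g ζ).re := by
    intro ζ hζ
    have h := key ζ hζ
    have : 1 / (ζ.re - 1) < 1 := by
      rw [div_lt_one] <;> linarith
    linarith
  have part2 : ∀ ζ : ℂ, 2 < ζ.re → ∀ n : ℕ, 2 < (g^[n] ζ).re := by
    intro ζ hζ n
    induction n with
    | zero => simpa using hζ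
    | succ n ih =>
        rw [Function.iterate_succ_apply']
        exact lt_trans ih (part1 _ ih)
  refine ⟨part1, part2, ?_⟩
  intro ζ hζ
  set δ : ℝ := 1 - 1 / (ζ.re - 1) with hδ
  have hδpos : 0 < δ := by
    have : 1 / (ζ.re - 1) < 1 := by
      rw [div_lt_one] <;> linarith
    simp only [hδ]; linarith
  have bound : ∀ n : ℕ, ζ.re + n * δ ≤ (g^[n] ζ).re := by
    intro n
    induction n with
    | zero => simp
    | succ n ih =>
        rw [Function.iterate_succ_apply']
        have hσ : 2 < (g^[n] ζ).re := part2 ζ hζ n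
        have hk := key _ hσ
        have hmono : 1 / ((g^[n] ζ).re - 1) ≤ 1 / (ζ.re - 1) := by
          apply one_div_le_one_div_of_le
          · linarith
          · nlinarith [ih, hδpos, (Nat.cast_nonneg n : (0:ℝ) ≤ n)]
        have hstep : (g^[n] ζ).re + δ ≤ (g (g^[n] ζ)).re := by
          rw [hδ]; linarith
        push_cast
        nlinarith [ih, hstep]
  apply tendsto_atTop_mono bound
  apply tendsto_atTop_add_const_left
  exact Tendsto.atTop_mul_const hδpos tendsto_natCast_atTop_atTop
end

section
/- Let λ = e^{2πiθ} with θ ∈ (1/6, 5/6) of bounded type, g̃(ζ) = ζ + 1 - 1/(1+(λ-1)ζ), and c̃ = c₂/η where c₂ = -(1-√(1-λ))^{-1} and η = (λ-1)/λ. Then g̃(c̃) = 1 + 1/(1-λ) + 2√(1/(1-λ)), and consequently Re g̃(c̃) > 2, so the orbit of c̃ under g̃ converges to ∞. -/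
open Complex Filter Topology

set_option maxHeartbeats 1000000

theorem stmt13 (θ : ℝ) (hθ : Irrational θ) (hθ1 : 1 / 6 < θ) (hθ2 : θ < 5 / 6)
    (lam : ℂ) (hlam : lam = Complex.exp (2 * Real.pi * Complex.I * θ))
    (s : ℂ) (hs : s ^ 2 = 1 - lam) (hsre : 0 < s.re)
    (w : ℂ) (hw : w ^ 2 = 1 / (1 - lam)) (hwre : 0 < w.re)
    (η : ℂ) (hη : η = (lam - 1) / lam)
    (c2 : ℂ) (hc2 : c2 = -(1 - s)⁻¹)
    (ctil : ℂ) (hctil : ctil = c2 / η)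
    (g : ℂ → ℂ) (hg : ∀ ζ, g ζ = ζ + 1 - 1 / (1 + (lam - 1) * ζ)) :
    g ctil = 1 + 1 / (1 - lam) + 2 * w ∧
    2 < (g ctil).re ∧
    Tendsto (fun n : ℕ => ‖g^[n] ctil‖) atTop atTop := by
  have hpi := Real.pi_pos
  -- lam as exp of real multiple of I
  have hlam' : lam = Complex.exp ((2 * Real.pi * θ : ℝ) * Complex.I) := by
    rw [hlam]; push_cast; ring_nf
  have habs : ‖lam‖ = 1 := by rw [hlam']; exact Complex.norm_exp_ofReal_mul_I _
  have hre : lam.re = Real.cos (2 * Real.pi * θ) := by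
    rw [hlam']; exact Complex.exp_ofReal_mul_I_re _
  have hnsq : Complex.normSq lam = 1 := by
    have := Complex.sq_norm lam; rw [habs] at this; simpa using this.symm
  have hsq : lam.re ^ 2 + lam.im ^ 2 = 1 := by
    have := hnsq; rw [Complex.normSq_apply] at this; nlinarith [this]
  -- cos(2πθ) < 1/2
  have hcos : lam.re < 1 / 2 := by
    rw [hre]
    set x := 2 * Real.pi * θ with hx
    have hx1 : Real.pi / 3 < x := by rw [hx]; nlinarith
    have hx2 : x < 5 * Real.pi / 3 := by rw [hx]; nlinarith
    have hp3 : Real.cos (Real.pi / 3) = 1 / 2 := by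
      rw [Real.cos_pi_div_three]
    rcases le_or_gt x Real.pi with h | h
    · have := Real.cos_lt_cos_of_nonneg_of_le_pi (by positivity) h hx1
      linarith [this, hp3.le, hp3.ge]
    · have hcx : Real.cos x = Real.cos (2 * Real.pi - x) := by
        rw [Real.cos_sub]; simp [Real.cos_two_pi, Real.sin_two_pi]
      have h1 : Real.pi / 3 < 2 * Real.pi - x := by linarith
      have h2 : 2 * Real.pi - x ≤ Real.pi := by linarith
      have := Real.cos_lt_cos_of_nonneg_of_le_pi (by positivity) h2 h1
      rw [hcx]; linarith [this, hp3.le, hp3.ge]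
  -- |lam - 1| > 1
  have hnsq1 : Complex.normSq (lam - 1) = 2 - 2 * lam.re := by
    rw [Complex.normSq_apply]; simp [Complex.sub_re, Complex.sub_im]; nlinarith [hsq]
  have habs1 : 1 < ‖lam - 1‖ := by
    have h1 : (1:ℝ) < Complex.normSq (lam - 1) := by rw [hnsq1]; linarith
    have h2 := Complex.sq_norm (lam - 1)
    nlinarith [norm_nonneg (lam - 1)]
  -- basic nonvanishing
  have hlam0 : lam ≠ 0 := by
    intro h; rw [h] at habs; simp at habs
  have hs0 : s ≠ 0 := by
    intro h; rw [h] at hsre; simp at hsre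
  have h1lam : (1 : ℂ) - lam ≠ 0 := by
    intro h; rw [h] at hs; exact hs0 (by simpa [pow_eq_zero_iff] using hs)
  have hs1 : (1 : ℂ) - s ≠ 0 := by
    intro h
    have : s = 1 := by linear_combination -h
    rw [this] at hs
    have : lam = 0 := by linear_combination hs
    exact hlam0 this
  have hlameq : lam = 1 - s ^ 2 := by linear_combination hs
  -- ctil = (1+s)/s^2
  have hctil' : ctil = (1 + s) / s ^ 2 := by
    rw [hctil, hc2, hη, hlameq]
    field_simp
    ring
  -- 1 + (lam-1) * ctil = -s
  have hden : 1 + (lam - 1) * ctil = -s := by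
    rw [hctil', hlameq]
    field_simp
    ring
  -- w = 1/s
  have hw1 : w = 1 / s := by
    have hws : (w * s) ^ 2 = 1 := by
      rw [mul_pow, hw, ← hs]
      field_simp
    have h2 : (w * s - 1) * (w * s + 1) = 0 := by linear_combination hws
    rcases mul_eq_zero.mp h2 with h | h
    · rw [eq_div_iff hs0]
      linear_combination h
    · exfalso
      have hw' : w = -(1 / s) := by
        field_simp
        linear_combination h
      have hpos : 0 < s.re / Complex.normSq s :=
        div_pos hsre (Complex.normSq_pos.mpr hs0)
      rw [hw'] at hwre
      simp only [one_div, Complex.neg_re, Complex.inv_re] at hwre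
      linarith
  -- Part 1
  have part1 : g ctil = 1 + 1 / (1 - lam) + 2 * w := by
    rw [hg, hden, hctil', hw1, ← hs]
    have hneg : (1 : ℂ) / (-s) = -(1 / s) := by
      field_simp
    rw [hneg]
    field_simp
    ring
  -- Re(1/(1-lam)) = 1/2
  have hhalf : ((1 : ℂ) / (1 - lam)).re = 1 / 2 := by
    rw [one_div, Complex.inv_re]
    have h1 : (1 - lam).re = 1 - lam.re := by simp [Complex.sub_re]
    have h2 : Complex.normSq (1 - lam) = 2 * (1 - lam.re) := by
      rw [Complex.normSq_apply]
      simp only [Complex.sub_re, Complex.sub_im, Complex.one_re, Complex.one_im]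
      nlinarith [hsq]
    rw [h1, h2]
    rw [div_eq_iff (by nlinarith)]
    ring
  -- Re w ≥ 1/√2 > 1/2
  have hwrel : 1 / 2 < w.re := by
    have h1 : (w ^ 2).re = 1 / 2 := by rw [hw, hhalf]
    have h2 : w.re ^ 2 - w.im ^ 2 = 1 / 2 := by
      rw [pow_two, Complex.mul_re] at h1; nlinarith [h1]
    nlinarith [sq_nonneg w.im]
  have hgcre : (g ctil).re = 3 / 2 + 2 * w.re := by
    rw [part1]
    simp only [Complex.add_re, Complex.one_re, Complex.mul_re, Complex.re_ofNat,
      Complex.im_ofNat, hhalf]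
    ring
  have part2 : 2 < (g ctil).re := by rw [hgcre]; linarith
  -- Part 3: escape estimate
  have hstep : ∀ ζ : ℂ, 5 / 2 ≤ ζ.re → ζ.re + 1 / 4 ≤ (g ζ).re := by
    intro ζ hζ
    set u := 1 + (lam - 1) * ζ with hu
    have habsζ : (5:ℝ) / 2 ≤ ‖ζ‖ := le_trans hζ (Complex.re_le_norm ζ)
    have habsu : 3 / 2 ≤ ‖u‖ := by
      have h1 : ‖(lam - 1) * ζ‖ = ‖lam - 1‖ * ‖ζ‖ :=
        norm_mul _ _
      have h2 : (5:ℝ) / 2 ≤ ‖(lam - 1) * ζ‖ := by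
        rw [h1]
        nlinarith [habs1, habsζ]
      have h3 : ‖(lam - 1) * ζ‖ ≤ ‖u‖ + 1 := by
        calc ‖(lam - 1) * ζ‖ = ‖u + (-1)‖ := by rw [hu]; ring_nf
          _ ≤ ‖u‖ + ‖-1‖ := norm_add_le _ _
          _ = ‖u‖ + 1 := by simp
      linarith
    have hu0 : u ≠ 0 := by
      intro h; rw [h] at habsu; simp at habsu; linarith
    have hinv : (u⁻¹).re ≤ 2 / 3 := by
      calc (u⁻¹).re ≤ ‖u⁻¹‖ := Complex.re_le_norm _
        _ = (‖u‖)⁻¹ := norm_inv _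
        _ ≤ (3/2 : ℝ)⁻¹ := by
            apply inv_anti₀ (by norm_num) habsu
        _ = 2 / 3 := by norm_num
    have hgre : (g ζ).re = ζ.re + 1 - (u⁻¹).re := by
      rw [hg ζ, ← hu, one_div]
      simp [Complex.sub_re, Complex.add_re]
    rw [hgre]
    linarith
  have horb : ∀ n : ℕ, 5 / 2 + (n : ℝ) / 4 ≤ (g^[n + 1] ctil).re := by
    intro n
    induction n with
    | zero => simp [hgcre]; linarith
    | succ m ih =>
      have h1 : g^[m + 1 + 1] ctil = g (g^[m + 1] ctil) := Function.iterate_succ_apply' g _ _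
      have h2 : (5:ℝ) / 2 ≤ (g^[m + 1] ctil).re := by
        have : (0:ℝ) ≤ (m:ℝ)/4 := by positivity
        linarith
      have := hstep _ h2
      rw [h1]
      push_cast
      linarith
  refine ⟨part1, part2, ?_⟩
  have hT : Tendsto (fun n : ℕ => 5 / 2 + ((n : ℝ) - 1) / 4) atTop atTop := by
    apply tendsto_atTop_add_const_left
    apply Tendsto.atTop_div_const (by norm_num : (0:ℝ) < 4)
    exact tendsto_atTop_add_const_right _ _ tendsto_natCast_atTop_atTop
  refine tendsto_atTop_mono' atTop ?_ hT
  filter_upwards [eventually_ge_atTop 1] with n hn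
  obtain ⟨m, rfl⟩ := Nat.exists_eq_add_of_le hn
  have h1 := horb m
  have h2 : (g^[m + 1] ctil).re ≤ ‖g^[m + 1] ctil‖ := Complex.re_le_norm _
  have h3 : g^[1 + m] ctil = g^[m + 1] ctil := by rw [Nat.add_comm]
  simp only [h3]
  push_cast
  linarith
end
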